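/- Let m, n ≥ 1 and let c : Fin m × Fin n → ℝ be an arbitrary cost function. Then there exists a coupling γ of the uniform measures (a matrix γ : Fin m → Fin n → ℝ with γ(i,j) ≥ 0 for all i,j, ∑_j γ(i,j) = 1/m for every i, and ∑_i γ(i,j) = 1/n for every j) such that γ minimizes the Kantorovich cost ∑_{i,j} c(i,j) γ(i,j) among all such couplings and the total number of pairs (i,j) with γ(i,j) ≠ 0 is at most lcm(m,n) = m·n/gcd(m,n). -/

import Mathlib

open Finset Matrix

lemma kss_exists_min_perm {K : Type*} [Fintype K] [DecidableEq K] (C : Matrix K K ℝ) :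
    ∃ σ : Equiv.Perm K, ∀ M ∈ doublyStochastic ℝ K,
      ∑ k, C k (σ k) ≤ ∑ k, ∑ l, C k l * M k l := by
  classical
  set f : Matrix K K ℝ → ℝ := fun M => ∑ k, ∑ l, C k l * M k l with hf
  have hperm : ∀ τ : Equiv.Perm K, f (τ.permMatrix ℝ) = ∑ k, C k (τ k) := by
    intro τ
    simp [f, Equiv.Perm.permMatrix, PEquiv.toMatrix_apply, Equiv.toPEquiv_apply, mul_ite]
  obtain ⟨σ, -, hσ⟩ := Finset.exists_min_image Finset.univ
    (fun τ : Equiv.Perm K => f (τ.permMatrix ℝ)) ⟨1, Finset.mem_univ 1⟩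
  refine ⟨σ, fun M hM => ?_⟩
  obtain ⟨w, hw0, hw1, hsum⟩ := exists_eq_sum_perm_of_mem_doublyStochastic hM
  have hMkl : ∀ k l, M k l = ∑ τ, w τ * (τ.permMatrix ℝ) k l := by
    intro k l; rw [← hsum]; simp [Matrix.sum_apply]
  have key : f M = ∑ τ, w τ * f (τ.permMatrix ℝ) := by
    show (∑ k, ∑ l, C k l * M k l) = _
    calc ∑ k, ∑ l, C k l * M k l
        = ∑ k, ∑ l, ∑ τ, w τ * (C k l * (τ.permMatrix ℝ) k l) := by
          refine Finset.sum_congr rfl fun k _ => Finset.sum_congr rfl fun l _ => ?_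
          rw [hMkl, Finset.mul_sum]
          exact Finset.sum_congr rfl fun τ _ => by ring
      _ = ∑ k, ∑ τ, ∑ l, w τ * (C k l * (τ.permMatrix ℝ) k l) :=
          Finset.sum_congr rfl fun k _ => Finset.sum_comm
      _ = ∑ τ, ∑ k, ∑ l, w τ * (C k l * (τ.permMatrix ℝ) k l) := Finset.sum_comm
      _ = ∑ τ, w τ * f (τ.permMatrix ℝ) := by
          refine Finset.sum_congr rfl fun τ _ => ?_
          simp [f, Finset.mul_sum]
  rw [← hperm σ]; show f _ ≤ f M; rw [key]
  calc f (σ.permMatrix ℝ) = ∑ τ, w τ * f (σ.permMatrix ℝ) := by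
        rw [← Finset.sum_mul, hw1, one_mul]
    _ ≤ ∑ τ, w τ * f (τ.permMatrix ℝ) :=
        Finset.sum_le_sum fun τ _ =>
          mul_le_mul_of_nonneg_left (hσ τ (Finset.mem_univ τ)) (hw0 τ)
theorem kantorovich_sparse_support_solution
    (m n : ℕ) (hm : 1 ≤ m) (hn : 1 ≤ n) (c : Fin m × Fin n → ℝ) :
    ∃ γ : Fin m → Fin n → ℝ,
      (∀ i j, 0 ≤ γ i j) ∧
      (∀ i, ∑ j, γ i j = 1 / m) ∧
      (∀ j, ∑ i, γ i j = 1 / n) ∧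
      (∀ γ' : Fin m → Fin n → ℝ,
        (∀ i j, 0 ≤ γ' i j) →
        (∀ i, ∑ j, γ' i j = 1 / m) →
        (∀ j, ∑ i, γ' i j = 1 / n) →
        ∑ i, ∑ j, c (i, j) * γ i j ≤ ∑ i, ∑ j, c (i, j) * γ' i j) ∧
      (Finset.univ.filter fun p : Fin m × Fin n => γ p.1 p.2 ≠ 0).card ≤
        Nat.lcm m n := by
  classical
  obtain ⟨a, h1⟩ : m ∣ Nat.lcm m n := Nat.dvd_lcm_left m n
  obtain ⟨b, h2⟩ : n ∣ Nat.lcm m n := Nat.dvd_lcm_right m n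
  set L := Nat.lcm m n with hL
  have hL0 : 0 < L := Nat.pos_of_ne_zero (Nat.lcm_ne_zero (by omega) (by omega))
  have hLr : (0 : ℝ) < (L : ℝ) := by exact_mod_cast hL0
  have hmr : (0 : ℝ) < (m : ℝ) := by exact_mod_cast hm
  have hnr : (0 : ℝ) < (n : ℝ) := by exact_mod_cast hn
  have hma : (m : ℝ) * a = L := by exact_mod_cast h1.symm
  have hnb : (n : ℝ) * b = L := by exact_mod_cast h2.symm
  have hcard : Fintype.card (Fin m × Fin a) = Fintype.card (Fin n × Fin b) := by
    simp only [Fintype.card_prod, Fintype.card_fin, ← h1, ← h2]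
  obtain ⟨e⟩ : Nonempty (Fin m × Fin a ≃ Fin n × Fin b) := ⟨Fintype.equivOfCardEq hcard⟩
  obtain ⟨σ, hσ⟩ := kss_exists_min_perm
    (fun k l : Fin m × Fin a => c (k.1, (e l).1))
  set F : Fin m × Fin a → Fin m × Fin n := fun k => (k.1, (e (σ k)).1) with hF
  set γ : Fin m → Fin n → ℝ :=
    fun i j => ((Finset.univ.filter fun k : Fin m × Fin a => F k = (i, j)).card : ℝ) / L
    with hγ
  have cardfst : ∀ i : Fin m,
      (Finset.univ.filter fun k : Fin m × Fin a => k.1 = i).card = a := by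
    intro i
    have h : (Finset.univ.filter fun k : Fin m × Fin a => k.1 = i)
        = {i} ×ˢ Finset.univ := by
      ext ⟨x, y⟩; simp [Finset.mem_product, eq_comm]
    rw [h]; simp
  have cardsnd : ∀ j : Fin n,
      (Finset.univ.filter fun k : Fin m × Fin a => (e (σ k)).1 = j).card = b := by
    intro j
    have h : (Finset.univ.filter fun k : Fin m × Fin a => (e (σ k)).1 = j).card
        = (Finset.univ.filter fun l : Fin n × Fin b => l.1 = j).card := by
      refine Finset.card_equiv (σ.trans e) fun k => ?_
      simp [Equiv.trans]
    rw [h]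
    have h' : (Finset.univ.filter fun l : Fin n × Fin b => l.1 = j)
        = {j} ×ˢ Finset.univ := by
      ext ⟨x, y⟩; simp [Finset.mem_product, eq_comm]
    rw [h']; simp
  have hrowcard : ∀ i : Fin m,
      ∑ j, (Finset.univ.filter fun k : Fin m × Fin a => F k = (i, j)).card = a := by
    intro i
    have key : (Finset.univ.filter fun k : Fin m × Fin a => k.1 = i).card
        = ∑ j : Fin n, ((Finset.univ.filter fun k : Fin m × Fin a => k.1 = i).filter
            fun k => (e (σ k)).1 = j).card :=
      Finset.card_eq_sum_card_fiberwise (fun x _ => Finset.mem_univ _)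
    rw [cardfst i] at key
    refine Eq.trans (Finset.sum_congr rfl fun j _ => ?_) key.symm
    congr 1
    rw [Finset.filter_filter]
    ext k
    simp [hF, Prod.ext_iff]
  have hcolcard : ∀ j : Fin n,
      ∑ i, (Finset.univ.filter fun k : Fin m × Fin a => F k = (i, j)).card = b := by
    intro j
    have key : (Finset.univ.filter fun k : Fin m × Fin a => (e (σ k)).1 = j).card
        = ∑ i : Fin m, ((Finset.univ.filter fun k : Fin m × Fin a => (e (σ k)).1 = j).filter
            fun k => k.1 = i).card :=
      Finset.card_eq_sum_card_fiberwise (fun x _ => Finset.mem_univ _)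
    rw [cardsnd j] at key
    refine Eq.trans (Finset.sum_congr rfl fun i _ => ?_) key.symm
    congr 1
    rw [Finset.filter_filter]
    ext k
    simp [hF, Prod.ext_iff, and_comm]
  have hrow : ∀ i, ∑ j, γ i j = 1 / m := by
    intro i
    rw [hγ]
    simp only
    rw [← Finset.sum_div]
    rw [show (∑ j, ((Finset.univ.filter fun k : Fin m × Fin a => F k = (i, j)).card : ℝ))
        = (a : ℝ) by exact_mod_cast congrArg Nat.cast (hrowcard i)]
    rw [div_eq_div_iff hLr.ne' hmr.ne']
    linarith [hma]
  have hcol : ∀ j, ∑ i, γ i j = 1 / n := by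
    intro j
    rw [hγ]
    simp only
    rw [← Finset.sum_div]
    rw [show (∑ i, ((Finset.univ.filter fun k : Fin m × Fin a => F k = (i, j)).card : ℝ))
        = (b : ℝ) by exact_mod_cast congrArg Nat.cast (hcolcard j)]
    rw [div_eq_div_iff hLr.ne' hnr.ne']
    linarith [hnb]
  have hnonneg : ∀ i j, 0 ≤ γ i j := by
    intro i j
    rw [hγ]
    positivity
  have hcost : ∑ i, ∑ j, c (i, j) * γ i j = (∑ k, c (F k)) / L := by
    have step1 : ∑ i, ∑ j, c (i, j) * γ i j
        = (∑ p : Fin m × Fin n,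
            c p * ((Finset.univ.filter fun k : Fin m × Fin a => F k = p).card : ℝ)) / L := by
      rw [Fintype.sum_prod_type, Finset.sum_div]
      refine Finset.sum_congr rfl fun i _ => ?_
      calc ∑ j, c (i, j) * γ i j
          = ∑ j, c (i, j) *
              ((Finset.univ.filter fun k : Fin m × Fin a => F k = (i, j)).card : ℝ) / L := by
            refine Finset.sum_congr rfl fun j _ => ?_
            rw [hγ, mul_div_assoc]
        _ = (∑ j, c (i, j) *
              ((Finset.univ.filter fun k : Fin m × Fin a => F k = (i, j)).card : ℝ)) / L :=
            (Finset.sum_div _ _ _).symm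
    rw [step1]
    congr 1
    have step2 : ∀ p : Fin m × Fin n,
        c p * ((Finset.univ.filter fun k : Fin m × Fin a => F k = p).card : ℝ)
        = ∑ k ∈ Finset.univ.filter fun k : Fin m × Fin a => F k = p, c (F k) := by
      intro p
      rw [Finset.sum_congr rfl (fun k hk => by rw [(Finset.mem_filter.1 hk).2]),
        Finset.sum_const, nsmul_eq_mul, mul_comm]
    rw [Finset.sum_congr rfl fun p _ => step2 p]
    exact Finset.sum_fiberwise _ _ _
  refine ⟨γ, hnonneg, hrow, hcol, ?_, ?_⟩
  · -- optimality
    intro γ' h0 hr' hc'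
    set M' : Matrix (Fin m × Fin a) (Fin m × Fin a) ℝ :=
      fun k l => ((m : ℝ) * n / L) * γ' k.1 (e l).1 with hM'
    have sum2 : ∀ u : Fin n → ℝ, ∑ l : Fin m × Fin a, u (e l).1 = b * ∑ j, u j := by
      intro u
      rw [show (∑ l : Fin m × Fin a, u (e l).1) = ∑ l2 : Fin n × Fin b, u l2.1 from
        Equiv.sum_comp e (fun l2 : Fin n × Fin b => u l2.1), Fintype.sum_prod_type]
      simp [Finset.sum_const, Finset.mul_sum]
    have sum1 : ∀ v : Fin m → ℝ, ∑ k : Fin m × Fin a, v k.1 = a * ∑ i, v i := by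
      intro v
      rw [Fintype.sum_prod_type]
      simp [Finset.sum_const, Finset.mul_sum, Finset.sum_comm (f := fun (i : Fin m) (_ : Fin a) => v i)]
    have hmem : M' ∈ doublyStochastic ℝ (Fin m × Fin a) := by
      rw [mem_doublyStochastic_iff_sum]
      refine ⟨fun k l => mul_nonneg (by positivity) (h0 _ _), fun k => ?_, fun l => ?_⟩
      · rw [show (∑ l : Fin m × Fin a, M' k l)
            = ((m : ℝ) * n / L) * ∑ l : Fin m × Fin a, γ' k.1 (e l).1 by
            rw [Finset.mul_sum]]
        rw [sum2 (fun j => γ' k.1 j), hr' k.1]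
        field_simp
        linear_combination hnb
      · rw [show (∑ k : Fin m × Fin a, M' k l)
            = ((m : ℝ) * n / L) * ∑ k : Fin m × Fin a, γ' k.1 (e l).1 by
            rw [Finset.mul_sum]]
        rw [sum1 (fun i => γ' i (e l).1), hc' (e l).1]
        field_simp
        linear_combination hma
    have hcost' : (∑ k : Fin m × Fin a, ∑ l : Fin m × Fin a,
          c (k.1, (e l).1) * M' k l)
        = L * ∑ i, ∑ j, c (i, j) * γ' i j := by
      have e1 : (∑ k : Fin m × Fin a, ∑ l : Fin m × Fin a, c (k.1, (e l).1) * M' k l)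
          = ((m : ℝ) * n / L) *
            ∑ k : Fin m × Fin a, ∑ l : Fin m × Fin a,
              c (k.1, (e l).1) * γ' k.1 (e l).1 := by
        rw [Finset.mul_sum]
        refine Finset.sum_congr rfl fun k _ => ?_
        rw [Finset.mul_sum]
        exact Finset.sum_congr rfl fun l _ => by rw [hM']; ring
      rw [e1]
      have inner : ∀ k : Fin m × Fin a,
          (∑ l : Fin m × Fin a, c (k.1, (e l).1) * γ' k.1 (e l).1)
          = b * ∑ j, c (k.1, j) * γ' k.1 j := fun k =>
        sum2 (fun j => c (k.1, j) * γ' k.1 j)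
      rw [Finset.sum_congr rfl fun k _ => inner k, ← Finset.mul_sum,
        sum1 (fun i => ∑ j, c (i, j) * γ' i j)]
      have hX : ((m : ℝ) * n / L) * (b * (a * ∑ i, ∑ j, c (i, j) * γ' i j))
          = L * ∑ i, ∑ j, c (i, j) * γ' i j := by
        rw [div_mul_eq_mul_div, div_eq_iff hLr.ne']
        linear_combination ((n : ℝ) * b * ∑ i, ∑ j, c (i, j) * γ' i j) * hma
          + ((L : ℝ) * ∑ i, ∑ j, c (i, j) * γ' i j) * hnb
      exact hX
    have hle := hσ M' hmem
    have hfk : ∀ k : Fin m × Fin a, c (k.1, (e (σ k)).1) = c (F k) := fun k => rfl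
    rw [hcost]
    rw [div_le_iff₀ hLr]
    calc (∑ k, c (F k)) = ∑ k : Fin m × Fin a, c (k.1, (e (σ k)).1) := rfl
      _ ≤ ∑ k : Fin m × Fin a, ∑ l : Fin m × Fin a, c (k.1, (e l).1) * M' k l := hle
      _ = (∑ i, ∑ j, c (i, j) * γ' i j) * L := by rw [hcost']; ring
  · -- support bound
    have hsub : (Finset.univ.filter fun p : Fin m × Fin n => γ p.1 p.2 ≠ 0)
        ⊆ Finset.univ.image F := by
      intro p hp
      have hp2 : γ p.1 p.2 ≠ 0 := (Finset.mem_filter.1 hp).2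
      have hcardne :
          (Finset.univ.filter fun k : Fin m × Fin a => F k = (p.1, p.2)).card ≠ 0 := by
        intro h
        apply hp2
        rw [hγ]
        simp [h]
      obtain ⟨k, hk⟩ := Finset.card_pos.1 (Nat.pos_of_ne_zero hcardne)
      have hk2 := (Finset.mem_filter.1 hk).2
      exact Finset.mem_image.2 ⟨k, Finset.mem_univ k, by rw [hk2]⟩
    calc (Finset.univ.filter fun p : Fin m × Fin n => γ p.1 p.2 ≠ 0).card
        ≤ (Finset.univ.image F).card := Finset.card_le_card hsub
      _ ≤ (Finset.univ : Finset (Fin m × Fin a)).card := Finset.card_image_le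
      _ = m * a := by simp
      _ ≤ Nat.lcm m n := le_of_eq h1.symm
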